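/- Let a, b ∈ ℂ be nonzero and let λ ∈ ℂ* be a complex number which is not a root of unity. In ℙ²(ℂ) with homogeneous coordinates (x : y : z), let L₁ = {x − y = 0}, L₂ = {ax + by − z = 0}, L₃ = {bx + ay − z = 0}, and let β be the automorphism of ℙ²(ℂ) induced by the diagonal matrix diag(λ, λ⁻¹, 1). For every integer m, the point P_m = (1 : 1 : aλ^m + bλ^{−m}) satisfies: P_m ∈ L₁, β^m(P_m) ∈ L₂, and β^{−m}(P_m) ∈ L₃. Consequently, the set of points of L₁ whose β-orbit intersects both L₂ and L₃ is infinite. -/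

import Mathlib

noncomputable section

open Projectivization

/-- The projective plane `ℙ²(ℂ)`. -/
abbrev ProjPlane := Projectivization ℂ (Fin 3 → ℂ)

/-- The automorphism of `ℙ²(ℂ)` induced by a linear automorphism `g` of `ℂ³`. -/
def projAct (g : (Fin 3 → ℂ) ≃ₗ[ℂ] (Fin 3 → ℂ)) (x : ProjPlane) : ProjPlane :=
  Projectivization.map g.toLinearMap g.injective x

/-- The point lies on the line cut out by the linear form `f`. -/
def OnLine (P : ProjPlane) (f : (Fin 3 → ℂ) →ₗ[ℂ] ℂ) : Prop :=
  P.submodule ≤ LinearMap.ker f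

/-- coordinate functionals -/
def coord (i : Fin 3) : (Fin 3 → ℂ) →ₗ[ℂ] ℂ := LinearMap.proj i

/-- The line `L₁ : x − y = 0`. -/
def lineOne : (Fin 3 → ℂ) →ₗ[ℂ] ℂ := coord 0 - coord 1

/-- The line `L₂ : ax + by − z = 0`. -/
def lineTwo (a b : ℂ) : (Fin 3 → ℂ) →ₗ[ℂ] ℂ := a • coord 0 + b • coord 1 - coord 2

/-- The line `L₃ : bx + ay − z = 0`. -/
def lineThree (a b : ℂ) : (Fin 3 → ℂ) →ₗ[ℂ] ℂ := b • coord 0 + a • coord 1 - coord 2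

/-- The point `P_m = (1 : 1 : aλ^m + bλ^{−m})`. -/
def pt (a b lam : ℂ) (m : ℤ) : ProjPlane :=
  Projectivization.mk ℂ ![1, 1, a * lam ^ m + b * lam ^ (-m)] (by
    intro h
    have h0 := congrFun h 0
    simp at h0)

lemma onLine_mk (v : Fin 3 → ℂ) (hv : v ≠ 0) (f : (Fin 3 → ℂ) →ₗ[ℂ] ℂ) :
    OnLine (Projectivization.mk ℂ v hv) f ↔ f v = 0 := by
  rw [OnLine, Projectivization.submodule_mk, Submodule.span_singleton_le_iff_mem,
    LinearMap.mem_ker]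

/-- For `β` induced by `diag(λ, λ⁻¹, 1)` with `λ` not a root of unity, the point
`P_m = (1 : 1 : aλ^m + bλ^{−m})` lies on `L₁ : x = y`, `β^m(P_m)` lies on
`L₂ : ax + by = z` and `β^{−m}(P_m)` lies on `L₃ : bx + ay = z`; consequently infinitely
many points of `L₁` have a `β`-orbit meeting both `L₂` and `L₃`. -/
theorem example_infinite_family_diagonal (a b lam : ℂ) (ha : a ≠ 0) (hb : b ≠ 0)
    (hlam : lam ≠ 0) (hroot : ∀ n : ℕ, 0 < n → lam ^ n ≠ 1)
    (β : (Fin 3 → ℂ) ≃ₗ[ℂ] (Fin 3 → ℂ))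
    (hβ : β.toLinearMap = Matrix.toLin' (Matrix.diagonal ![lam, lam⁻¹, 1])) :
    (∀ m : ℤ,
      OnLine (pt a b lam m) lineOne ∧
      OnLine (projAct (β ^ m) (pt a b lam m)) (lineTwo a b) ∧
      OnLine (projAct (β ^ (-m)) (pt a b lam m)) (lineThree a b)) ∧
    {P : ProjPlane | OnLine P lineOne ∧
      (∃ m : ℤ, OnLine (projAct (β ^ m) P) (lineTwo a b)) ∧
      (∃ k : ℤ, OnLine (projAct (β ^ k) P) (lineThree a b))}.Infinite := by
  -- zpow injectivity of lam
  have hzinj : ∀ s t : ℤ, lam ^ s = lam ^ t → s = t := by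
    intro s t hst
    by_contra hne
    have hd : lam ^ (s - t) = 1 := by
      rw [zpow_sub₀ hlam, hst, div_self (zpow_ne_zero _ hlam)]
    have hd0 : s - t ≠ 0 := sub_ne_zero.mpr hne
    have : lam ^ (s - t).natAbs = 1 := by
      rcases Int.natAbs_eq (s - t) with h | h
      · rw [← zpow_natCast, ← h, hd]
      · rw [← zpow_natCast, ← neg_neg ((s - t).natAbs : ℤ), ← h, zpow_neg, hd, inv_one]
    exact hroot _ (Int.natAbs_pos.mpr hd0) this
  -- action of β on vectors
  have hβv : ∀ v : Fin 3 → ℂ, ∀ i, β v i = ![lam, lam⁻¹, 1] i * v i := by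
    intro v i
    have : β v = Matrix.toLin' (Matrix.diagonal ![lam, lam⁻¹, 1]) v := by
      rw [← hβ]; rfl
    rw [this, Matrix.toLin'_apply, Matrix.mulVec_diagonal]
  -- action of β⁻¹
  have hβinv : ∀ v : Fin 3 → ℂ, ∀ i, β⁻¹ v i = ![lam⁻¹, lam, 1] i * v i := by
    intro v i
    set w : Fin 3 → ℂ := fun i => ![lam⁻¹, lam, 1] i * v i with hw
    have hbw : β w = v := by
      funext j
      rw [hβv]
      fin_cases j <;> simp [hw] <;> field_simp
    have : β⁻¹ v = w := by
      rw [← hbw]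
      exact β.symm_apply_apply w
    rw [this]
  -- action of β ^ m
  have hpow : ∀ m : ℤ, ∀ v : Fin 3 → ℂ, ∀ i,
      (β ^ m) v i = ![lam ^ m, lam ^ (-m), 1] i * v i := by
    intro m
    induction m using Int.induction_on with
    | zero => intro v i; fin_cases i <;> simp
    | succ n ih =>
        intro v i
        have h1 : (β ^ ((n : ℤ) + 1)) v = (β ^ (n : ℤ)) (β v) := by
          rw [zpow_add_one]; rfl
        rw [h1, ih, hβv v i]
        fin_cases i
        · show lam ^ (n : ℤ) * (lam * v 0) = lam ^ ((n : ℤ) + 1) * v 0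
          rw [zpow_add_one₀ hlam]; ring
        · show lam ^ (-(n : ℤ)) * (lam⁻¹ * v 1) = lam ^ (-((n : ℤ) + 1)) * v 1
          rw [show (-((n : ℤ) + 1)) = -(n : ℤ) + (-1) by ring, zpow_add₀ hlam, zpow_neg_one]
          ring
        · show 1 * (1 * v 2) = 1 * v 2
          ring
    | pred n ih =>
        intro v i
        have h1 : (β ^ (-(n : ℤ) - 1)) v = (β ^ (-(n : ℤ))) (β⁻¹ v) := by
          rw [zpow_sub_one]; rfl
        rw [h1, ih, hβinv v i]
        fin_cases i
        · show lam ^ (-(n : ℤ)) * (lam⁻¹ * v 0) = lam ^ (-(n : ℤ) - 1) * v 0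
          rw [show (-(n : ℤ) - 1) = -(n : ℤ) + (-1) by ring, zpow_add₀ hlam, zpow_neg_one]
          ring
        · show lam ^ (- -(n : ℤ)) * (lam * v 1) = lam ^ (-(-(n : ℤ) - 1)) * v 1
          rw [show (-(-(n : ℤ) - 1)) = - -(n : ℤ) + 1 by ring, zpow_add_one₀ hlam]
          ring
        · show 1 * (1 * v 2) = 1 * v 2
          ring
  -- main pointwise statement
  have hmain : ∀ m : ℤ,
      OnLine (pt a b lam m) lineOne ∧
      OnLine (projAct (β ^ m) (pt a b lam m)) (lineTwo a b) ∧
      OnLine (projAct (β ^ (-m)) (pt a b lam m)) (lineThree a b) := by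
    intro m
    set v : Fin 3 → ℂ := ![1, 1, a * lam ^ m + b * lam ^ (-m)] with hv
    have hv0 : v ≠ 0 := by
      intro h; have := congrFun h 0; simp [hv] at this
    refine ⟨?_, ?_, ?_⟩
    · rw [pt, onLine_mk]
      simp [lineOne, coord, hv]
    · rw [pt, projAct, Projectivization.map_mk, onLine_mk]
      have h2 := hpow m v
      rw [← hv]
      simp only [lineTwo, coord, LinearMap.sub_apply, LinearMap.add_apply, LinearMap.smul_apply,
        LinearMap.proj_apply, LinearEquiv.coe_coe, smul_eq_mul, h2 0, h2 1, h2 2]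
      simp [hv]
      try ring
    · rw [pt, projAct, Projectivization.map_mk, onLine_mk]
      have h2 := hpow (-m) v
      rw [← hv]
      simp only [lineThree, coord, LinearMap.sub_apply, LinearMap.add_apply, LinearMap.smul_apply,
        LinearMap.proj_apply, LinearEquiv.coe_coe, smul_eq_mul, h2 0, h2 1, h2 2]
      simp [hv]
      try ring
  refine ⟨hmain, ?_⟩
  -- membership
  have hmem : ∀ m : ℤ, pt a b lam m ∈ {P : ProjPlane | OnLine P lineOne ∧
      (∃ m : ℤ, OnLine (projAct (β ^ m) P) (lineTwo a b)) ∧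
      (∃ k : ℤ, OnLine (projAct (β ^ k) P) (lineThree a b))} := by
    intro m
    obtain ⟨h1, h2, h3⟩ := hmain m
    exact ⟨h1, ⟨m, h2⟩, ⟨-m, h3⟩⟩
  -- collision analysis
  have hcol : ∀ m k : ℤ, pt a b lam m = pt a b lam k → m ≠ k → a * lam ^ (m + k) = b := by
    intro m k hmk hne
    rw [pt, pt, Projectivization.mk_eq_mk_iff] at hmk
    obtain ⟨c, hc⟩ := hmk
    have hc0 : (c : ℂ) = 1 := by
      have := congrFun hc 0
      simpa [Units.smul_def] using this
    have hc2 := congrFun hc 2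
    simp only [Pi.smul_apply, Matrix.cons_val_two, Matrix.tail_cons, Matrix.head_cons,
      Units.smul_def, hc0, one_mul] at hc2
    -- hc2 : a * lam ^ k + b * lam ^ (-k) = a * lam ^ m + b * lam ^ (-m)
    have hum : lam ^ m ≠ 0 := zpow_ne_zero _ hlam
    have huk : lam ^ k ≠ 0 := zpow_ne_zero _ hlam
    have hne2 : lam ^ m - lam ^ k ≠ 0 := sub_ne_zero.mpr (fun h => hne (hzinj _ _ h))
    have key : (lam ^ m - lam ^ k) * (a * (lam ^ m * lam ^ k) - b) = 0 := by
      have e1 : lam ^ (-m) = (lam ^ m)⁻¹ := by rw [zpow_neg]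
      have e2 : lam ^ (-k) = (lam ^ k)⁻¹ := by rw [zpow_neg]
      rw [e1, e2] at hc2
      rw [one_smul] at hc2
      field_simp at hc2
      linear_combination -hc2
    have := mul_eq_zero.mp key
    rcases this with h | h
    · exact absurd h hne2
    · rw [zpow_add₀ hlam]
      exact sub_eq_zero.mp h
  by_cases hex : ∃ s : ℤ, a * lam ^ s = b
  · obtain ⟨s₀, hs₀⟩ := hex
    have hinj : Function.Injective (fun n : ℕ => pt a b lam (s₀.natAbs + 1 + n)) := by
      intro n n' h
      by_contra hne
      have hnn : (s₀.natAbs + 1 + n : ℤ) ≠ (s₀.natAbs + 1 + n' : ℤ) := by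
        intro h'; apply hne; omega
      have := hcol _ _ h hnn
      have hsum : a * lam ^ ((s₀.natAbs + 1 + n : ℤ) + (s₀.natAbs + 1 + n' : ℤ)) = a * lam ^ s₀ := by
        rw [this, hs₀]
      have := hzinj _ _ (mul_left_cancel₀ ha hsum)
      have hs : s₀ ≤ (s₀.natAbs : ℤ) := Int.le_natAbs
      omega
    exact Set.infinite_of_injective_forall_mem hinj (fun n => hmem _)
  · have hinj : Function.Injective (fun m : ℤ => pt a b lam m) := by
      intro m k h
      by_contra hne
      exact hex ⟨m + k, hcol m k h hne⟩
    exact Set.infinite_of_injective_forall_mem hinj (fun m => hmem m)
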